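/- Let Φ be of class 𝒫 with parameters 1 < p < q < ∞ and let Φ̃ be its complementary Young function. Then for all u, v > 0: (i) Φ⁻¹(uv) ≤ max(u^{1/p}, u^{1/q})·Φ⁻¹(v); (ii) min(u^{1/p}, u^{1/q})·Φ⁻¹(v) ≤ Φ⁻¹(uv); and (iii) min(u^{1/q'}, u^{1/p'})·Φ̃⁻¹(v) ≤ Φ̃⁻¹(uv), where p', q' are the Hölder conjugates of p, q. -/

import Mathlib

open MeasureTheory Set Filter Topology ENNReal

noncomputable section

/-- `Φ` is of class `𝒫` with parameters `1 < p < q < ∞`. -/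
def IsClassP (Φ Φinv : ℝ → ℝ) (p q : ℝ) : Prop :=
  1 < p ∧ p < q ∧
  (∀ t : ℝ, 0 < t → 0 < Φ t) ∧ (∀ t : ℝ, 0 < t → 0 < Φinv t) ∧
  (∀ t : ℝ, 0 < t → Φinv (Φ t) = t) ∧ (∀ t : ℝ, 0 < t → Φ (Φinv t) = t) ∧
  ∃ ρ : ℝ → ℝ, ContinuousOn ρ (Set.Ioi 0) ∧ ConcaveOn ℝ (Set.Ioi 0) ρ ∧
    (∀ t : ℝ, 0 < t → 0 < ρ t) ∧
    (∀ s t : ℝ, 0 < s → 0 < t → ρ (s * t) ≤ max 1 s * ρ t) ∧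
    (∀ t : ℝ, 0 < t → Φinv t = t ^ (1/p) * ρ (t ^ (1/q - 1/p)))

/-- for `Φ` of class `𝒫` with parameters `1 < p < q`, its inverse and the
inverse of the complementary Young function `Φ̃` satisfy, for all `u,v > 0`:
`Φ⁻¹(uv) ≤ max(u^{1/p}, u^{1/q})·Φ⁻¹(v)`, `min(u^{1/p}, u^{1/q})·Φ⁻¹(v) ≤ Φ⁻¹(uv)` and
`min(u^{1/q'}, u^{1/p'})·Φ̃⁻¹(v) ≤ Φ̃⁻¹(uv)`, where `1/p' = 1 − 1/p`, `1/q' = 1 − 1/q`. -/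

-- upper estimate
theorem est_upper (p q : ℝ) (ρ Φinv : ℝ → ℝ)
    (hρpos : ∀ t : ℝ, 0 < t → 0 < ρ t)
    (hρscale : ∀ s t : ℝ, 0 < s → 0 < t → ρ (s * t) ≤ max 1 s * ρ t)
    (hrep : ∀ t : ℝ, 0 < t → Φinv t = t ^ (1/p) * ρ (t ^ (1/q - 1/p)))
    (u v : ℝ) (hu : 0 < u) (hv : 0 < v) :
    Φinv (u * v) ≤ max (u ^ (1/p)) (u ^ (1/q)) * Φinv v := by
  have huv : (0:ℝ) < u * v := mul_pos hu hv
  rw [hrep _ huv, hrep _ hv, Real.mul_rpow hu.le hv.le, Real.mul_rpow hu.le hv.le]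
  have h1 : ρ (u ^ (1/q - 1/p) * v ^ (1/q - 1/p)) ≤ max 1 (u ^ (1/q - 1/p)) * ρ (v ^ (1/q - 1/p)) :=
    hρscale _ _ (Real.rpow_pos_of_pos hu _) (Real.rpow_pos_of_pos hv _)
  calc u ^ (1/p) * v ^ (1/p) * ρ (u ^ (1/q - 1/p) * v ^ (1/q - 1/p))
      ≤ u ^ (1/p) * v ^ (1/p) * (max 1 (u ^ (1/q - 1/p)) * ρ (v ^ (1/q - 1/p))) := by
        apply mul_le_mul_of_nonneg_left h1
        positivity
    _ = (u ^ (1/p) * max 1 (u ^ (1/q - 1/p))) * (v ^ (1/p) * ρ (v ^ (1/q - 1/p))) := by ring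
    _ = max (u ^ (1/p)) (u ^ (1/q)) * (v ^ (1/p) * ρ (v ^ (1/q - 1/p))) := by
        rw [mul_max_of_nonneg _ _ (Real.rpow_nonneg hu.le _), mul_one,
          ← Real.rpow_add hu]
        ring_nf

theorem minmax_inv (u a b : ℝ) (hu : 0 < u) :
    min (u ^ a) (u ^ b) * max ((u⁻¹) ^ a) ((u⁻¹) ^ b) = 1 := by
  rw [Real.inv_rpow hu.le, Real.inv_rpow hu.le]
  rcases le_total (u ^ a) (u ^ b) with h | h
  · rw [min_eq_left h, max_eq_left (inv_anti₀ (Real.rpow_pos_of_pos hu a) h),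
      mul_inv_cancel₀ (Real.rpow_pos_of_pos hu a).ne']
  · rw [min_eq_right h, max_eq_right (inv_anti₀ (Real.rpow_pos_of_pos hu b) h),
      mul_inv_cancel₀ (Real.rpow_pos_of_pos hu b).ne']

theorem est_lower (p q : ℝ) (Φinv : ℝ → ℝ) (u v : ℝ) (hu : 0 < u) (hv : 0 < v)
    (hinvpos : ∀ t : ℝ, 0 < t → 0 < Φinv t)
    (hup : ∀ u v : ℝ, 0 < u → 0 < v → Φinv (u * v) ≤ max (u ^ (1/p)) (u ^ (1/q)) * Φinv v)
    (hmm : min (u ^ (1/p)) (u ^ (1/q)) * max ((u⁻¹) ^ (1/p)) ((u⁻¹) ^ (1/q)) = 1) :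
    min (u ^ (1/p)) (u ^ (1/q)) * Φinv v ≤ Φinv (u * v) := by
  have h := hup u⁻¹ (u * v) (inv_pos.2 hu) (mul_pos hu hv)
  rw [inv_mul_cancel_left₀ hu.ne'] at h
  have hmin : (0:ℝ) ≤ min (u ^ (1/p)) (u ^ (1/q)) :=
    le_min (Real.rpow_pos_of_pos hu _).le (Real.rpow_pos_of_pos hu _).le
  calc min (u ^ (1/p)) (u ^ (1/q)) * Φinv v
      ≤ min (u ^ (1/p)) (u ^ (1/q)) * (max ((u⁻¹) ^ (1/p)) ((u⁻¹) ^ (1/q)) * Φinv (u * v)) :=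
        mul_le_mul_of_nonneg_left h hmin
    _ = (min (u ^ (1/p)) (u ^ (1/q)) * max ((u⁻¹) ^ (1/p)) ((u⁻¹) ^ (1/q))) * Φinv (u * v) := by
        ring
    _ = Φinv (u * v) := by rw [hmm, one_mul]

theorem inv_mono (p q : ℝ) (Φinv : ℝ → ℝ) (hp : 0 < p) (hq : 0 < q)
    (hinvpos : ∀ t : ℝ, 0 < t → 0 < Φinv t)
    (hlow : ∀ u v : ℝ, 0 < u → 0 < v →
      min (u ^ (1/p)) (u ^ (1/q)) * Φinv v ≤ Φinv (u * v)) :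
    ∀ v₁ v₂ : ℝ, 0 < v₁ → v₁ ≤ v₂ → Φinv v₁ ≤ Φinv v₂ := by
  intro v₁ v₂ h1 h12
  have hu : (0:ℝ) < v₂ / v₁ := div_pos (h1.trans_le h12) h1
  have hu1 : (1:ℝ) ≤ v₂ / v₁ := (one_le_div h1).2 h12
  have h := hlow (v₂ / v₁) v₁ hu h1
  rw [div_mul_cancel₀ _ h1.ne'] at h
  refine le_trans ?_ h
  have : (1:ℝ) ≤ min ((v₂/v₁) ^ (1/p)) ((v₂/v₁) ^ (1/q)) :=
    le_min (Real.one_le_rpow hu1 (by positivity)) (Real.one_le_rpow hu1 (by positivity))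
  nlinarith [(hinvpos v₁ h1)]

theorem phi_mono (Φ Φinv : ℝ → ℝ)
    (hΦpos : ∀ t : ℝ, 0 < t → 0 < Φ t)
    (hinv1 : ∀ t : ℝ, 0 < t → Φinv (Φ t) = t)
    (hinvmono : ∀ v₁ v₂ : ℝ, 0 < v₁ → v₁ ≤ v₂ → Φinv v₁ ≤ Φinv v₂) :
    ∀ s₁ s₂ : ℝ, 0 < s₁ → s₁ ≤ s₂ → Φ s₁ ≤ Φ s₂ := by
  intro s₁ s₂ h1 h12
  by_contra h
  push_neg at h
  have h2 : (0:ℝ) < s₂ := h1.trans_le h12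
  have := hinvmono (Φ s₂) (Φ s₁) (hΦpos _ h2) h.le
  rw [hinv1 _ h1, hinv1 _ h2] at this
  have : s₁ = s₂ := le_antisymm h12 this
  rw [this] at h
  exact lt_irrefl _ h

theorem phi_scale (p q : ℝ) (Φ Φinv : ℝ → ℝ)
    (hΦpos : ∀ t : ℝ, 0 < t → 0 < Φ t)
    (hinvpos : ∀ t : ℝ, 0 < t → 0 < Φinv t)
    (hinv1 : ∀ t : ℝ, 0 < t → Φinv (Φ t) = t)
    (hinv2 : ∀ t : ℝ, 0 < t → Φ (Φinv t) = t)
    (hmono : ∀ s₁ s₂ : ℝ, 0 < s₁ → s₁ ≤ s₂ → Φ s₁ ≤ Φ s₂)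
    (hlow : ∀ u v : ℝ, 0 < u → 0 < v →
      min (u ^ (1/p)) (u ^ (1/q)) * Φinv v ≤ Φinv (u * v)) :
    ∀ w t : ℝ, 0 < w → 0 < t → Φ (min (w ^ (1/p)) (w ^ (1/q)) * t) ≤ w * Φ t := by
  intro w t hw ht
  have hΦt : 0 < Φ t := hΦpos t ht
  have h := hlow w (Φ t) hw hΦt
  rw [hinv1 t ht] at h
  have hminpos : 0 < min (w ^ (1/p)) (w ^ (1/q)) :=
    lt_min (Real.rpow_pos_of_pos hw _) (Real.rpow_pos_of_pos hw _)
  have := hmono _ _ (mul_pos hminpos ht) h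
  rwa [hinv2 _ (mul_pos hw hΦt)] at this

theorem inv_upper (p q : ℝ) (ρ Φinv : ℝ → ℝ) (hp : 0 < p) (hpq : p ≤ q)
    (hρscale : ∀ s t : ℝ, 0 < s → 0 < t → ρ (s * t) ≤ max 1 s * ρ t)
    (hrep : ∀ t : ℝ, 0 < t → Φinv t = t ^ (1/p) * ρ (t ^ (1/q - 1/p))) :
    ∀ v : ℝ, 1 ≤ v → Φinv v ≤ ρ 1 * v ^ (1/p) := by
  intro v hv
  have hv0 : (0:ℝ) < v := lt_of_lt_of_le one_pos hv
  have hq : (0:ℝ) < q := lt_of_lt_of_le hp hpq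
  have hα : 1/q - 1/p ≤ 0 := by
    have : 1/q ≤ 1/p := one_div_le_one_div_of_le hp hpq
    linarith
  have hva : v ^ (1/q - 1/p) ≤ 1 := Real.rpow_le_one_of_one_le_of_nonpos hv hα
  have hvapos : 0 < v ^ (1/q - 1/p) := Real.rpow_pos_of_pos hv0 _
  have h : ρ (v ^ (1/q - 1/p)) ≤ ρ 1 := by
    have := hρscale (v ^ (1/q - 1/p)) 1 hvapos one_pos
    rwa [mul_one, max_eq_left hva, one_mul] at this
  rw [hrep _ hv0]
  calc v ^ (1/p) * ρ (v ^ (1/q - 1/p)) ≤ v ^ (1/p) * ρ 1 :=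
        mul_le_mul_of_nonneg_left h (Real.rpow_nonneg hv0.le _)
    _ = ρ 1 * v ^ (1/p) := mul_comm _ _

theorem phi_lower (p : ℝ) (Φ Φinv : ℝ → ℝ) (C : ℝ) (hp : 0 < p) (hC : 0 < C)
    (hinv1 : ∀ t : ℝ, 0 < t → Φinv (Φ t) = t)
    (hup : ∀ v : ℝ, 1 ≤ v → Φinv v ≤ C * v ^ (1/p)) :
    ∀ t : ℝ, 0 < t → 1 ≤ Φ t → t ^ p ≤ C ^ p * Φ t := by
  intro t ht hΦt
  have h : t ≤ C * (Φ t) ^ (1/p) := by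
    have := hup (Φ t) hΦt
    rwa [hinv1 t ht] at this
  have hΦt0 : (0:ℝ) < Φ t := lt_of_lt_of_le one_pos hΦt
  calc t ^ p ≤ (C * (Φ t) ^ (1/p)) ^ p := Real.rpow_le_rpow ht.le h hp.le
    _ = C ^ p * ((Φ t) ^ (1/p)) ^ p := Real.mul_rpow hC.le (Real.rpow_nonneg hΦt0.le _)
    _ = C ^ p * Φ t := by
        rw [← Real.rpow_mul hΦt0.le, one_div_mul_cancel hp.ne', Real.rpow_one]

theorem bdd_S (p : ℝ) (Φ Φinv : ℝ → ℝ) (A : ℝ) (hp : 1 < p) (hA : 0 < A)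
    (hΦ0 : Φ 0 = 0)
    (hΦpos : ∀ t : ℝ, 0 < t → 0 < Φ t)
    (hinvmono : ∀ v₁ v₂ : ℝ, 0 < v₁ → v₁ ≤ v₂ → Φinv v₁ ≤ Φinv v₂)
    (hinv1 : ∀ t : ℝ, 0 < t → Φinv (Φ t) = t)
    (hlow : ∀ t : ℝ, 0 < t → 1 ≤ Φ t → t ^ p ≤ A * Φ t)
    (s : ℝ) (hs : 0 < s) :
    BddAbove {x : ℝ | ∃ t : ℝ, 0 ≤ t ∧ x = s * t - Φ t} := by
  set T := Φinv 1 with hT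
  set M := (s * A) ^ (1/(p-1)) with hM
  have hM0 : 0 ≤ M := Real.rpow_nonneg (mul_pos hs hA).le _
  refine ⟨max 0 (s * max T M), ?_⟩
  rintro x ⟨t, ht, rfl⟩
  rcases ht.eq_or_lt with h0 | ht0
  · rw [← h0, hΦ0]; simpa using le_max_left _ _
  have hΦt : 0 < Φ t := hΦpos t ht0
  have key : ∀ t' : ℝ, 0 < t' → t' ≤ max T M → s * t' - Φ t' ≤ max 0 (s * max T M) := by
    intro t' ht' hle
    have : s * t' ≤ s * max T M := mul_le_mul_of_nonneg_left hle hs.le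
    have h2 := hΦpos t' ht'
    calc s * t' - Φ t' ≤ s * t' := by linarith
      _ ≤ s * max T M := this
      _ ≤ max 0 (s * max T M) := le_max_right _ _
  rcases lt_or_ge (Φ t) 1 with h1 | h1
  · -- t ≤ T
    have : t ≤ T := by
      have := hinvmono (Φ t) 1 hΦt h1.le
      rwa [hinv1 t ht0] at this
    exact key t ht0 (this.trans (le_max_left _ _))
  rcases le_or_gt t M with h2 | h2
  · exact key t ht0 (h2.trans (le_max_right _ _))
  · -- s * t < Φ t
    have hMp : M ^ (p-1) = s * A := by
      rw [hM, ← Real.rpow_mul (mul_pos hs hA).le, one_div_mul_cancel (by linarith : p - 1 ≠ 0),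
        Real.rpow_one]
    have hlt : s * A * t < t ^ p := by
      have h3 : M ^ (p-1) < t ^ (p-1) :=
        Real.rpow_lt_rpow hM0 h2 (by linarith)
      rw [hMp] at h3
      calc s * A * t < t ^ (p-1) * t := by nlinarith
        _ = t ^ p := by
            rw [← Real.rpow_add_one ht0.ne' (p-1)]
            norm_num
    have := hlow t ht0 h1
    have hst : s * t < Φ t := by nlinarith
    have : s * t - Φ t ≤ 0 := by linarith
    exact this.trans (le_max_left _ _)

theorem phit_scale (p q : ℝ) (Φ Φt : ℝ → ℝ) (hp : 0 < p) (hq : 0 < q)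
    (hΦt : ∀ s : ℝ, Φt s = sSup {x : ℝ | ∃ t : ℝ, 0 ≤ t ∧ x = s * t - Φ t})
    (hΦ0 : Φ 0 = 0)
    (hbdd : ∀ s : ℝ, 0 < s → BddAbove {x : ℝ | ∃ t : ℝ, 0 ≤ t ∧ x = s * t - Φ t})
    (hscale : ∀ w t : ℝ, 0 < w → 0 < t →
      Φ (min (w ^ (1/p)) (w ^ (1/q)) * t) ≤ w * Φ t)
    (u s : ℝ) (hu : 0 < u) (hs : 0 < s) :
    Φt (min (u ^ (1 - 1/q)) (u ^ (1 - 1/p)) * s) ≤ u * Φt s := by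
  set m := min (u ^ (1 - 1/q)) (u ^ (1 - 1/p)) with hm
  have hm0 : 0 < m := lt_min (Real.rpow_pos_of_pos hu _) (Real.rpow_pos_of_pos hu _)
  have hΦtsnonneg : 0 ≤ Φt s := by
    rw [hΦt s]
    exact le_csSup (hbdd s hs) ⟨0, le_refl 0, by simp [hΦ0]⟩
  have hmu : m / u = min ((u⁻¹) ^ (1/p)) ((u⁻¹) ^ (1/q)) := by
    have e : ∀ r : ℝ, (u⁻¹) ^ r = u ^ (1 - r) / u := by
      intro r
      have h1 : u ^ (1 - r) = u ^ (-r) * u := by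
        rw [← Real.rpow_add_one hu.ne' (-r)]
        ring_nf
      rw [Real.inv_rpow hu.le, ← Real.rpow_neg hu.le, h1,
        mul_div_assoc, div_self hu.ne', mul_one]
    rw [e (1/p), e (1/q), hm, min_comm (u ^ (1 - 1/q)) _, min_div_div_right hu.le]
  rw [hΦt (m * s)]
  apply Real.sSup_le
  · rintro x ⟨t, ht, rfl⟩
    rcases ht.eq_or_lt with h0 | ht0
    · rw [← h0, hΦ0]
      simp only [mul_zero, sub_zero]
      positivity
    · set t' := (m / u) * t with ht'
      have ht'0 : 0 < t' := mul_pos (div_pos hm0 hu) ht0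
      have hΦt' : Φ t' ≤ u⁻¹ * Φ t := by
        have := hscale u⁻¹ t (inv_pos.2 hu) ht0
        rwa [← hmu] at this
      have hmem : s * t' - Φ t' ≤ Φt s := by
        rw [hΦt s]
        exact le_csSup (hbdd s hs) ⟨t', ht'0.le, rfl⟩
      have hid : m * s * t - Φ t ≤ u * (s * t' - Φ t') := by
        have h1 : u * (s * t') = m * s * t := by
          field_simp [ht']
          rw [ht']; field_simp
        have h2 : Φ t ≥ u * Φ t' := by
          have := mul_le_mul_of_nonneg_left hΦt' hu.le
          rwa [mul_inv_cancel_left₀ hu.ne'] at this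
        nlinarith
      calc m * s * t - Φ t ≤ u * (s * t' - Φ t') := hid
        _ ≤ u * Φt s := mul_le_mul_of_nonneg_left hmem hu.le
  · positivity

theorem phit_key (p q : ℝ) (Φ Φt Φtinv : ℝ → ℝ)
    (hΦt : ∀ s : ℝ, Φt s = sSup {x : ℝ | ∃ t : ℝ, 0 ≤ t ∧ x = s * t - Φ t})
    (hΦ0 : Φ 0 = 0)
    (hΦnonneg : ∀ t : ℝ, 0 ≤ t → 0 ≤ Φ t)
    (hbdd : ∀ s : ℝ, 0 < s → BddAbove {x : ℝ | ∃ t : ℝ, 0 ≤ t ∧ x = s * t - Φ t})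
    (hclaim1 : ∀ u s : ℝ, 0 < u → 0 < s →
      Φt (min (u ^ (1 - 1/q)) (u ^ (1 - 1/p)) * s) ≤ u * Φt s)
    (hΦtinvpos : ∀ s : ℝ, 0 < s → 0 < Φtinv s)
    (hΦtinv2 : ∀ s : ℝ, 0 < s → Φt (Φtinv s) = s)
    (u v : ℝ) (hu : 0 < u) (hv : 0 < v) :
    min (u ^ (1 - 1/q)) (u ^ (1 - 1/p)) * Φtinv v ≤ Φtinv (u * v) := by
  set m := min (u ^ (1 - 1/q)) (u ^ (1 - 1/p)) with hm
  have hm0 : 0 < m := lt_min (Real.rpow_pos_of_pos hu _) (Real.rpow_pos_of_pos hu _)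
  set s := Φtinv v with hsdef
  set y := Φtinv (u * v) with hydef
  have huv : 0 < u * v := mul_pos hu hv
  have hs : 0 < s := hΦtinvpos v hv
  have hy : 0 < y := hΦtinvpos (u * v) huv
  have hΦts : Φt s = v := hΦtinv2 v hv
  have hΦty : Φt y = u * v := hΦtinv2 (u * v) huv
  have hc1 : Φt (m * s) ≤ u * v := by
    have := hclaim1 u s hu hs
    rwa [hΦts] at this
  by_contra hcon
  push_neg at hcon
  -- hcon : y < m * s
  set τ := (u * v / 2) / y with hτ
  have hτ0 : 0 < τ := div_pos (by linarith) hy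
  set ε := min (u * v / 2) ((m * s - y) * τ / 2) with hε
  have hε0 : 0 < ε := lt_min (by linarith) (div_pos (mul_pos (by linarith) hτ0) two_pos)
  have hεle1 : ε ≤ u * v / 2 := min_le_left _ _
  have hεle2 : ε ≤ (m * s - y) * τ / 2 := min_le_right _ _
  have hsupy : sSup {x : ℝ | ∃ t : ℝ, 0 ≤ t ∧ x = y * t - Φ t} = u * v := by
    rw [← hΦt y, hΦty]
  have hne : {x : ℝ | ∃ t : ℝ, 0 ≤ t ∧ x = y * t - Φ t}.Nonempty :=
    ⟨0, 0, le_refl 0, by simp [hΦ0]⟩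
  obtain ⟨x₀, hx₀mem, hx₀⟩ := exists_lt_of_lt_csSup hne
    (by rw [hsupy]; linarith : u * v - ε < sSup {x : ℝ | ∃ t : ℝ, 0 ≤ t ∧ x = y * t - Φ t})
  obtain ⟨t₀, ht₀, rfl⟩ := hx₀mem
  have hΦt₀ : 0 ≤ Φ t₀ := hΦnonneg t₀ ht₀
  have hx₀pos : 0 < y * t₀ - Φ t₀ := by linarith
  have ht₀τ : τ < t₀ := by
    have h1 : u * v / 2 < y * t₀ := by linarith
    rw [hτ, div_lt_iff₀ hy]
    linarith [mul_comm y t₀]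
  have helem : m * s * t₀ - Φ t₀ ≤ Φt (m * s) := by
    rw [hΦt (m * s)]
    exact le_csSup (hbdd (m * s) (mul_pos hm0 hs)) ⟨t₀, ht₀, rfl⟩
  have hgt : u * v < m * s * t₀ - Φ t₀ := by
    have h2 : (m * s - y) * τ ≤ (m * s - y) * t₀ :=
      mul_le_mul_of_nonneg_left ht₀τ.le (by linarith)
    nlinarith
  linarith

theorem class_P_inverse_estimates
    (Φ Φinv Φt Φtinv : ℝ → ℝ) (p q : ℝ) (hΦ : IsClassP Φ Φinv p q)
    (hΦ0 : Φ 0 = 0)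
    (hΦt : ∀ s : ℝ, Φt s = sSup {x : ℝ | ∃ t : ℝ, 0 ≤ t ∧ x = s * t - Φ t})
    (hΦtinvpos : ∀ s : ℝ, 0 < s → 0 < Φtinv s)
    (hΦtinv1 : ∀ t : ℝ, 0 < t → Φtinv (Φt t) = t)
    (hΦtinv2 : ∀ s : ℝ, 0 < s → Φt (Φtinv s) = s) :
    ∀ u v : ℝ, 0 < u → 0 < v →
      Φinv (u * v) ≤ max (u ^ (1/p)) (u ^ (1/q)) * Φinv v ∧
      min (u ^ (1/p)) (u ^ (1/q)) * Φinv v ≤ Φinv (u * v) ∧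
      min (u ^ (1 - 1/q)) (u ^ (1 - 1/p)) * Φtinv v ≤ Φtinv (u * v) := by
  obtain ⟨hp, hpq, hΦpos, hΦinvpos, hinv1, hinv2, ρ, hρcont, hρconc, hρpos, hρscale, hrep⟩ := hΦ
  have hp0 : (0:ℝ) < p := lt_trans one_pos hp
  have hq0 : (0:ℝ) < q := lt_trans hp0 hpq
  have hup : ∀ u v : ℝ, 0 < u → 0 < v →
      Φinv (u * v) ≤ max (u ^ (1/p)) (u ^ (1/q)) * Φinv v :=
    fun u v hu hv => est_upper p q ρ Φinv hρpos hρscale hrep u v hu hv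
  have hlow : ∀ u v : ℝ, 0 < u → 0 < v →
      min (u ^ (1/p)) (u ^ (1/q)) * Φinv v ≤ Φinv (u * v) :=
    fun u v hu hv => est_lower p q Φinv u v hu hv hΦinvpos hup (minmax_inv u (1/p) (1/q) hu)
  have hinvmono := inv_mono p q Φinv hp0 hq0 hΦinvpos hlow
  have hmono := phi_mono Φ Φinv hΦpos hinv1 hinvmono
  have hscale := phi_scale p q Φ Φinv hΦpos hΦinvpos hinv1 hinv2 hmono hlow
  have hρ1 : 0 < ρ 1 := hρpos 1 one_pos
  have hupbd := inv_upper p q ρ Φinv hp0 hpq.le hρscale hrep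
  have hplow := phi_lower p Φ Φinv (ρ 1) hp0 hρ1 hinv1 hupbd
  have hbdd : ∀ s : ℝ, 0 < s → BddAbove {x : ℝ | ∃ t : ℝ, 0 ≤ t ∧ x = s * t - Φ t} :=
    fun s hs => bdd_S p Φ Φinv ((ρ 1) ^ p) hp (Real.rpow_pos_of_pos hρ1 p) hΦ0 hΦpos
      hinvmono hinv1 hplow s hs
  have hΦnonneg : ∀ t : ℝ, 0 ≤ t → 0 ≤ Φ t := by
    intro t ht
    rcases ht.eq_or_lt with h | h
    · rw [← h, hΦ0]
    · exact (hΦpos t h).le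
  have hclaim1 := phit_scale p q Φ Φt hp0 hq0 hΦt hΦ0 hbdd hscale
  intro u v hu hv
  refine ⟨hup u v hu hv, hlow u v hu hv, ?_⟩
  exact phit_key p q Φ Φt Φtinv hΦt hΦ0 hΦnonneg hbdd hclaim1 hΦtinvpos hΦtinv2 u v hu hv
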